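/- Let f : ℝ × ℝ^n → ℝ^n, g : ℝ × ℝ^n → ℝ^{n×m} and h : ℝ × ℝ^n → ℝ^m be infinitely differentiable, let σ ∈ ℕ^m with σ_i ≥ 1, and suppose that for each i ∈ {1,…,m}, L_g L_f^j h_i(t,x) = 0 for all (t,x) and all 0 ≤ j ≤ σ_i − 2. Let y_r : ℝ → ℝ^m and ν : I → ℝ^m be, respectively, infinitely differentiable and continuous, and assume the m×m matrix Γ_g(t,x), whose i-th row is L_g L_f^{σ_i−1} h_i(t,x), is invertible for all (t,x). Let x : I → ℝ^n be differentiable with ẋ(t) = f(t,x(t)) + g(t,x(t))u(t) for all t ∈ I, where u(t) := −Γ_g(t,x(t))^{-1}·( Γ_f(t,x(t)) − Γ_r(t) − ν(t) ), Γ_f(t,x) ∈ ℝ^m has i-th entry L_f^{σ_i} h_i(t,x), and Γ_r(t) ∈ ℝ^m has i-th entry y_{r,i}^{(σ_i)}(t). Then the tracking error E(t) := h(t,x(t)) − y_r(t) satisfies E_i^{(σ_i)}(t) = ν_i(t) for every i ∈ {1,…,m} and every t ∈ I. -/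

import Mathlib

noncomputable section

open Real MeasureTheory Finset

/-- One-step Lie derivative of a scalar function `ψ` along the time-varying vector field `f`:
`L_f ψ (t,x) = (∂ₓ ψ)(t,x) · f(t,x) + (∂ₜ ψ)(t,x)`, expressed as the total (Fréchet)
derivative of `ψ` in the direction `(1, f(t,x))`. -/
def lieF {n : ℕ} (f : ℝ × (Fin n → ℝ) → Fin n → ℝ) (ψ : ℝ × (Fin n → ℝ) → ℝ) :
    ℝ × (Fin n → ℝ) → ℝ :=
  fun p => fderiv ℝ ψ p (1, f p)

/-- Iterated Lie derivative `L_f^j ψ`, with `L_f^0 ψ = ψ`. -/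
def lieFIter {n : ℕ} (f : ℝ × (Fin n → ℝ) → Fin n → ℝ) (ψ : ℝ × (Fin n → ℝ) → ℝ)
    (j : ℕ) : ℝ × (Fin n → ℝ) → ℝ :=
  (lieF f)^[j] ψ

/-- Mixed Lie derivative `L_g ψ (t,x) = (∂ₓ ψ)(t,x) · g(t,x) ∈ ℝ^{1×m}` as a row vector;
the `i`-th component is the derivative of `ψ` in the (space) direction of the `i`-th
column of `g`. -/
def lieG {n m : ℕ} (g : ℝ × (Fin n → ℝ) → Fin n → Fin m → ℝ)
    (ψ : ℝ × (Fin n → ℝ) → ℝ) : ℝ × (Fin n → ℝ) → Fin m → ℝ :=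
  fun p i => fderiv ℝ ψ p (0, fun a => g p a i)

lemma nat_lt_top' (j : ℕ) : (j : WithTop ℕ∞) < ((⊤ : ℕ∞) : WithTop ℕ∞) := by
  exact_mod_cast WithTop.coe_lt_coe.2 (WithTop.coe_lt_top j)

lemma lieF_contDiff {n : ℕ} {f : ℝ × (Fin n → ℝ) → Fin n → ℝ}
    {ψ : ℝ × (Fin n → ℝ) → ℝ} (hf : ContDiff ℝ (⊤ : ℕ∞) f)
    (hψ : ContDiff ℝ (⊤ : ℕ∞) ψ) : ContDiff ℝ (⊤ : ℕ∞) (lieF f ψ) := by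
  exact (hψ.fderiv_right le_rfl).clm_apply (contDiff_const.prodMk hf)

lemma lieFIter_contDiff {n : ℕ} {f : ℝ × (Fin n → ℝ) → Fin n → ℝ}
    {ψ : ℝ × (Fin n → ℝ) → ℝ} (hf : ContDiff ℝ (⊤ : ℕ∞) f)
    (hψ : ContDiff ℝ (⊤ : ℕ∞) ψ) (j : ℕ) : ContDiff ℝ (⊤ : ℕ∞) (lieFIter f ψ j) := by
  induction j with
  | zero => exact hψ
  | succ k ih =>
      rw [lieFIter, Function.iterate_succ_apply']
      exact lieF_contDiff hf ih

/-- **Feedback-linearisation cancellation (Eqs. (21)-(22) of the paper).**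
With the controller `u = -Γ_g⁻¹(Γ_f - Γ_r - ν)`, the tracking error
`E_i(t) = h_i(t,x(t)) - y_{r,i}(t)` satisfies `E_i^{(σ_i)}(t) = ν_i(t)` on `I`. -/
theorem feedback_linearisation_cancellation
    {n m : ℕ} (f : ℝ × (Fin n → ℝ) → Fin n → ℝ)
    (g : ℝ × (Fin n → ℝ) → Fin n → Fin m → ℝ)
    (h : ℝ × (Fin n → ℝ) → Fin m → ℝ)
    (hf : ContDiff ℝ (⊤ : ℕ∞) f) (hg : ContDiff ℝ (⊤ : ℕ∞) g)
    (hh : ContDiff ℝ (⊤ : ℕ∞) h)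
    (σ : Fin m → ℕ) (hσ : ∀ i, 1 ≤ σ i)
    (hzero : ∀ i : Fin m, ∀ j : ℕ, j + 2 ≤ σ i →
      ∀ p : ℝ × (Fin n → ℝ), lieG g (lieFIter f (fun q => h q i) j) p = 0)
    (yr : ℝ → Fin m → ℝ) (hyr : ContDiff ℝ (⊤ : ℕ∞) yr)
    (I : Set ℝ) (hI : IsOpen I) (hI' : I.OrdConnected)
    (ν : ℝ → Fin m → ℝ) (hν : ContinuousOn ν I)
    -- `Γ_g(t,x)`, whose `i`-th row is `L_g L_f^{σ_i - 1} h_i(t,x)`, is invertible everywhere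
    (hΓ : ∀ p : ℝ × (Fin n → ℝ), IsUnit
      ((Matrix.of fun i a => lieG g (lieFIter f (fun q => h q i) (σ i - 1)) p a) :
        Matrix (Fin m) (Fin m) ℝ))
    (x : ℝ → Fin n → ℝ)
    -- the FBL controller `u = -Γ_g⁻¹ (Γ_f - Γ_r - ν)`
    (u : ℝ → Fin m → ℝ)
    (hu : ∀ t ∈ I, u t =
      -(((Matrix.of fun i a =>
            lieG g (lieFIter f (fun q => h q i) (σ i - 1)) (t, x t) a) :
          Matrix (Fin m) (Fin m) ℝ)⁻¹).mulVec
        (fun i => lieFIter f (fun q => h q i) (σ i) (t, x t) -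
          iteratedDeriv (σ i) (fun s => yr s i) t - ν t i))
    (hx : ∀ t ∈ I, HasDerivAt x
      (fun a => f (t, x t) a + ∑ i, g (t, x t) a i * u t i) t) :
    ∀ i : Fin m, ∀ t ∈ I, HasDerivAt
      (iteratedDerivWithin (σ i - 1) (fun s => h (s, x s) i - yr s i) I)
      (ν t i) t := by
  intro i t ht
  -- notation
  set ψ : ℕ → ℝ × (Fin n → ℝ) → ℝ := fun j => lieFIter f (fun q => h q i) j with hψdef
  have hhi : ContDiff ℝ (⊤ : ℕ∞) (fun q => h q i) :=
    (ContinuousLinearMap.proj i : (Fin m → ℝ) →L[ℝ] ℝ).contDiff.comp hh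
  have hψ : ∀ j, ContDiff ℝ (⊤ : ℕ∞) (ψ j) := fun j => lieFIter_contDiff hf hhi j
  have hψsucc : ∀ j, ψ (j + 1) = lieF f (ψ j) := by
    intro j; simp only [hψdef, lieFIter, Function.iterate_succ_apply']
  have hyri : ContDiff ℝ (⊤ : ℕ∞) (fun s => yr s i) :=
    (ContinuousLinearMap.proj i : (Fin m → ℝ) →L[ℝ] ℝ).contDiff.comp hyr
  -- chain rule along the trajectory
  have key : ∀ j, ∀ s ∈ I, HasDerivAt (fun r => ψ j (r, x r))
      (lieF f (ψ j) (s, x s) + ∑ k, lieG g (ψ j) (s, x s) k * u s k) s := by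
    intro j s hs
    have hcurve : HasDerivAt (fun r => (r, x r))
        ((1 : ℝ), fun a => f (s, x s) a + ∑ k, g (s, x s) a k * u s k) s :=
      (hasDerivAt_id s).prodMk (hx s hs)
    have hfd : HasFDerivAt (ψ j) (fderiv ℝ (ψ j) (s, x s)) (s, x s) :=
      ((hψ j).differentiable (by simp) (s, x s)).hasFDerivAt
    have := hfd.comp_hasDerivAt s hcurve
    refine this.congr_deriv ?_
    symm
    have hvec : ((1 : ℝ), fun a => f (s, x s) a + ∑ k, g (s, x s) a k * u s k)
        = ((1 : ℝ), f (s, x s)) +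
          ∑ k, u s k • ((0 : ℝ), fun a => g (s, x s) a k) := by
      apply Prod.ext
      · simp [Prod.fst_sum]
      · funext a
        simp [Prod.snd_sum, Finset.sum_apply, mul_comm]
    rw [hvec, map_add, map_sum, lieF]
    simp only [lieG, ContinuousLinearMap.map_smul, smul_eq_mul]
    congr 1
    exact Finset.sum_congr rfl fun k _ => mul_comm _ _
  -- error-dynamics chain: for j + 2 ≤ σ i
  have step : ∀ j, j + 2 ≤ σ i → ∀ s ∈ I,
      HasDerivAt (fun r => ψ j (r, x r) - iteratedDeriv j (fun w => yr w i) r)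
        (ψ (j + 1) (s, x s) - iteratedDeriv (j + 1) (fun w => yr w i) s) s := by
    intro j hj s hs
    have h1 := key j s hs
    have h1' : HasDerivAt (fun r => ψ j (r, x r)) (ψ (j + 1) (s, x s)) s := by
      have hz := hzero i j hj (s, x s)
      have : ∑ k, lieG g (ψ j) (s, x s) k * u s k = 0 := by
        apply Finset.sum_eq_zero
        intro k _
        have : lieG g (ψ j) (s, x s) k = 0 := by rw [hz]; rfl
        rw [this, zero_mul]
      rw [hψsucc]
      simpa [this] using h1
    have h2 : HasDerivAt (iteratedDeriv j (fun w => yr w i))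
        (iteratedDeriv (j + 1) (fun w => yr w i) s) s := by
      have hd : DifferentiableAt ℝ (iteratedDeriv j (fun w => yr w i)) s :=
        (hyri.differentiable_iteratedDeriv j (nat_lt_top' _)) s
      simpa [iteratedDeriv_succ] using hd.hasDerivAt
    exact h1'.sub h2
  -- top step: j = σ i - 1
  have top : ∀ s ∈ I,
      HasDerivAt (fun r => ψ (σ i - 1) (r, x r) -
        iteratedDeriv (σ i - 1) (fun w => yr w i) r) (ν s i) s := by
    intro s hs
    have hs1 : σ i - 1 + 1 = σ i := Nat.succ_pred_eq_of_pos (hσ i)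
    have h1 := key (σ i - 1) s hs
    set Γ : Matrix (Fin m) (Fin m) ℝ :=
      (Matrix.of fun i' a => lieG g (lieFIter f (fun q => h q i') (σ i' - 1)) (s, x s) a)
      with hΓdef
    have hrow : ∑ k, lieG g (ψ (σ i - 1)) (s, x s) k * u s k
        = Γ.mulVec (u s) i := by
      simp [Matrix.mulVec, dotProduct, hΓdef, hψdef]
    have hΓu : Γ.mulVec (u s) = fun i' =>
        -(lieFIter f (fun q => h q i') (σ i' - 1 + 1) (s, x s) -
          iteratedDeriv (σ i' - 1 + 1) (fun w => yr w i') s - ν s i') := by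
      have hσ' : ∀ i' : Fin m, σ i' - 1 + 1 = σ i' := fun i' => Nat.succ_pred_eq_of_pos (hσ i')
      rw [hu s hs]
      rw [Matrix.mulVec_neg, Matrix.mulVec_mulVec,
        Matrix.mul_nonsing_inv _ ((Matrix.isUnit_iff_isUnit_det Γ).mp (hΓ (s, x s))),
        Matrix.one_mulVec]
      funext i'
      rw [hσ' i']
      simp
    have h2 : HasDerivAt (iteratedDeriv (σ i - 1) (fun w => yr w i))
        (iteratedDeriv (σ i - 1 + 1) (fun w => yr w i) s) s := by
      have hd : DifferentiableAt ℝ (iteratedDeriv (σ i - 1) (fun w => yr w i)) s :=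
        (hyri.differentiable_iteratedDeriv (σ i - 1) (nat_lt_top' _)) s
      simpa [iteratedDeriv_succ] using hd.hasDerivAt
    have h3 := h1.sub h2
    refine h3.congr_deriv ?_
    symm
    rw [hrow, hΓu]
    have : lieF f (ψ (σ i - 1)) (s, x s) = ψ (σ i - 1 + 1) (s, x s) := by
      rw [hψsucc]
    rw [this]
    simp [hψdef]
    ring
  -- identify iteratedDerivWithin with the Lie-derivative formula on I
  have main : ∀ j, j ≤ σ i - 1 → ∀ s ∈ I,
      iteratedDerivWithin j (fun r => h (r, x r) i - yr r i) I s
        = ψ j (s, x s) - iteratedDeriv j (fun w => yr w i) s := by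
    intro j
    induction j with
    | zero =>
        intro _ s _
        simp [hψdef, lieFIter]
    | succ k ih =>
        intro hk s hs
        have hk' : k ≤ σ i - 1 := Nat.le_of_succ_le hk
        have hk2 : k + 2 ≤ σ i := by omega
        rw [iteratedDerivWithin_succ,
          derivWithin_of_isOpen hI hs]
        have heq : iteratedDerivWithin k (fun r => h (r, x r) i - yr r i) I
            =ᶠ[nhds s] fun r => ψ k (r, x r) - iteratedDeriv k (fun w => yr w i) r := by
          filter_upwards [hI.mem_nhds hs] with r hr
          exact ih hk' r hr
        rw [heq.deriv_eq]
        exact (step k hk2 s hs).deriv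
  -- conclude
  have heq : iteratedDerivWithin (σ i - 1) (fun r => h (r, x r) i - yr r i) I
      =ᶠ[nhds t] fun r => ψ (σ i - 1) (r, x r) -
        iteratedDeriv (σ i - 1) (fun w => yr w i) r := by
    filter_upwards [hI.mem_nhds ht] with r hr
    exact main (σ i - 1) le_rfl r hr
  exact (top t ht).congr_of_eventuallyEq heq
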